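/- The rowing graphs of the rooted graphs F₁, F₂, F₃ satisfy: λ₁(F₁, 1⁸) < -136/67; λ₁(F₂, 1⁷) < -178/87; λ₁(F₃, 1⁴) < -λ'; λ₁(F₁, 0^∞) = -λ*; λ₁(F₂, 0^∞) ∈ (-136/67, -2); and λ₁(F₃, 0^∞) ∈ (-178/87, -2). -/

import Mathlib

set_option maxHeartbeats 1600000
set_option synthInstance.maxSize 100000
set_option synthInstance.maxHeartbeats 100000000


/-- A rooted graph: a finite simple graph with a distinguished root vertex. -/
structure RootedGraph where
  V : Type
  [fintypeV : Fintype V]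
  G : SimpleGraph V
  root : V

attribute [instance] RootedGraph.fintypeV

/-- One-step extension of a rooted graph: attach a new path vertex (the new root)
to the old root, together with a clique of `k` new vertices each adjacent to
both the old root and the new path vertex. -/
def RootedGraph.extend (F : RootedGraph) (k : ℕ) : RootedGraph where
  V := F.V ⊕ Option (Fin k)
  G :=
    { Adj := fun a b =>
        match a, b with
        | Sum.inl u, Sum.inl w => F.G.Adj u w
        | Sum.inl u, Sum.inr _ => u = F.root
        | Sum.inr _, Sum.inl w => w = F.root
        | Sum.inr x, Sum.inr y => x ≠ y
      symm := by
        refine ⟨?_⟩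
        rintro (u | x) (w | y) h
        · exact F.G.adj_symm h
        · exact h
        · exact h
        · exact h.symm
      loopless := by
        refine ⟨?_⟩
        rintro (u | x) h
        · exact F.G.irrefl h
        · exact h rfl }
  root := Sum.inr none

/-- The rowing graph `(F, a)`. -/
def RootedGraph.rowing (F : RootedGraph) (a : List ℕ) : RootedGraph :=
  a.foldl RootedGraph.extend F

open scoped Classical in
/-- Adjacency matrix of (the graph of) a rooted graph. -/
noncomputable def RootedGraph.adjMat (F : RootedGraph) : Matrix F.V F.V ℝ :=
  Matrix.of fun u v => if F.G.Adj u v then 1 else 0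

/-- The smallest adjacency eigenvalue of a rooted graph. -/
noncomputable def RootedGraph.lam1 (F : RootedGraph) : ℝ :=
  sInf {t : ℝ | ∃ x : F.V → ℝ, x ≠ 0 ∧ F.adjMat.mulVec x = t • x}

/-- `F₁`: the path on 4 vertices `u₁u₂u₃u₄` rooted at `u₃`. -/
def F1 : RootedGraph := { V := Fin 4, G := SimpleGraph.pathGraph 4, root := 2 }

/-- `F₂`: the fan consisting of a path `p₁p₂p₃p₄` (vertices `0,1,2,3`) together with an
apex `r` (vertex `4`) adjacent to `p₁, p₂, p₃, p₄`, rooted at the apex `r`. -/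
def F2 : RootedGraph :=
  { V := Fin 5,
    G := SimpleGraph.fromRel fun i j => (i.val + 1 = j.val ∧ j.val ≤ 3) ∨ i.val = 4,
    root := 4 }

/-- `F₃`: the path on 6 vertices `w₁w₂w₃w₄w₅w₆` rooted at `w₅`. -/
def F3 : RootedGraph := { V := Fin 6, G := SimpleGraph.pathGraph 6, root := 4 }

namespace RootedGraph
variable (F : RootedGraph)

lemma adjMat_herm : F.adjMat.IsHermitian := by
  ext i j
  simp only [adjMat, Matrix.conjTranspose_apply, Matrix.of_apply, RCLike.star_def, starRingEnd_apply, star_trivial]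
  rw [F.G.adj_comm]

lemma abs_le_card {t : ℝ} (ht : t ∈ {t : ℝ | ∃ x : F.V → ℝ, x ≠ 0 ∧ F.adjMat.mulVec x = t • x}) :
    |t| ≤ Fintype.card F.V := by
  obtain ⟨x, hx, hev⟩ := ht
  have hne : (Finset.univ : Finset F.V).Nonempty := by
    obtain ⟨v, hv⟩ := Function.ne_iff.mp hx
    exact ⟨v, Finset.mem_univ v⟩
  obtain ⟨i, -, hi⟩ := Finset.exists_max_image Finset.univ (fun v => |x v|) hne
  have hxi : 0 < |x i| := by
    obtain ⟨v, hv⟩ := Function.ne_iff.mp hx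
    exact lt_of_lt_of_le (abs_pos.mpr hv) (hi v (Finset.mem_univ v))
  have h1 : |t| * |x i| ≤ (Fintype.card F.V : ℝ) * |x i| := by
    have : t * x i = ∑ j, F.adjMat i j * x j := by
      have h := congrFun hev i
      simp only [Matrix.mulVec, dotProduct, Pi.smul_apply, smul_eq_mul] at h
      rw [← h]
    calc |t| * |x i| = |t * x i| := (abs_mul t (x i)).symm
      _ = |∑ j, F.adjMat i j * x j| := by rw [this]
      _ ≤ ∑ j, |F.adjMat i j * x j| := Finset.abs_sum_le_sum_abs _ _
      _ ≤ ∑ _j : F.V, 1 * |x i| := by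
          apply Finset.sum_le_sum
          intro j _
          rw [abs_mul]
          apply mul_le_mul
          · simp only [adjMat, Matrix.of_apply]
            split <;> simp
          · exact hi j (Finset.mem_univ j)
          · exact abs_nonneg _
          · exact zero_le_one
      _ = (Fintype.card F.V : ℝ) * |x i| := by
          simp [Finset.sum_const, Finset.card_univ, mul_comm]
  exact le_of_mul_le_mul_right (by simpa using h1) hxi
end RootedGraph

namespace RootedGraph
variable (F : RootedGraph)

noncomputable def qf (x : F.V → ℝ) : ℝ := ∑ v, x v * F.adjMat.mulVec x v
noncomputable def ss (x : F.V → ℝ) : ℝ := ∑ v, x v ^ 2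


lemma lam1_le_ray (x : F.V → ℝ) (hx : x ≠ 0) :
    F.lam1 * ss F x ≤ qf F x := by
  classical
  haveI : Nonempty F.V := by
    obtain ⟨v, -⟩ := Function.ne_iff.mp hx; exact ⟨v⟩
  set E := EuclideanSpace ℝ F.V
  set T : E →ₗ[ℝ] E := Matrix.toEuclideanLin F.adjMat with hT
  have hsym : T.IsSymmetric := Matrix.isHermitian_iff_isSymmetric.mp (adjMat_herm F)
  have hTapp : ∀ y : E, ∀ v, T y v = F.adjMat.mulVec y v := by
    intro y v; rfl
  set x' : E := (WithLp.equiv 2 (F.V → ℝ)).symm x with hx'def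
  have hx' : x' ≠ 0 := by
    exact fun h => hx (by simpa [hx'def] using congrArg WithLp.ofLp h)
  haveI : Nontrivial E := ⟨⟨x', 0, hx'⟩⟩
  set μ : ℝ := ⨅ y : { y : E // y ≠ 0 }, RCLike.re (inner ℝ (T y) (y : E) : ℝ) / ‖(y : E)‖ ^ 2 with hμ
  have hev : Module.End.HasEigenvalue T μ := hsym.hasEigenvalue_iInf_of_finiteDimensional
  obtain ⟨v, hv⟩ := hev.exists_hasEigenvector
  have hmem : μ ∈ {t : ℝ | ∃ x : F.V → ℝ, x ≠ 0 ∧ F.adjMat.mulVec x = t • x} := by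
    refine ⟨WithLp.equiv 2 (F.V → ℝ) v, ?_, ?_⟩
    · simpa using hv.right
    · funext w
      have := congrArg (fun z : E => z w) (Module.End.mem_genEigenspace_one.mp hv.left)
      rw [WithLp.ofLp_smul] at this
      simpa [hTapp] using this
  -- Rayleigh quotient bounded below
  set T' : E →L[ℝ] E := LinearMap.toContinuousLinearMap T with hT'
  have hraybdd : BddBelow (Set.range fun y : { y : E // y ≠ 0 } =>
      RCLike.re (inner ℝ (T y) (y : E) : ℝ) / ‖(y : E)‖ ^ 2) := by
    refine ⟨-‖T'‖, ?_⟩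
    rintro r ⟨⟨y, hy⟩, rfl⟩
    have hny : 0 < ‖y‖ := norm_pos_iff.mpr hy
    have h1 : |(inner ℝ (T y) y : ℝ)| ≤ ‖T y‖ * ‖y‖ := abs_real_inner_le_norm _ _
    have h2 : ‖T y‖ ≤ ‖T'‖ * ‖y‖ := T'.le_opNorm y
    have h3 : -(‖T'‖ * ‖y‖ ^ 2) ≤ (inner ℝ (T y) y : ℝ) := by
      nlinarith [abs_nonneg (inner ℝ (T y) y : ℝ), neg_abs_le (inner ℝ (T y) y : ℝ), norm_nonneg (T y)]
    simp only [RCLike.re_to_real]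
    rw [le_div_iff₀ (by positivity)]
    nlinarith
  have hμle : μ ≤ RCLike.re (inner ℝ (T x') (x' : E) : ℝ) / ‖(x' : E)‖ ^ 2 := by
    exact ciInf_le hraybdd ⟨x', hx'⟩
  have hbdd : BddBelow {t : ℝ | ∃ x : F.V → ℝ, x ≠ 0 ∧ F.adjMat.mulVec x = t • x} := by
    refine ⟨-(Fintype.card F.V : ℝ), ?_⟩
    intro t ht
    have := abs_le_card F ht
    linarith [neg_abs_le t]
  have hlam : F.lam1 ≤ μ := csInf_le hbdd hmem
  -- identify Rayleigh quotient with qf/ss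
  have hinner : (inner ℝ (T x') (x' : E) : ℝ) = qf F x := by
    rw [real_inner_comm]
    simp only [PiLp.inner_apply, RCLike.inner_apply, starRingEnd_apply, star_trivial, qf]
    apply Finset.sum_congr rfl
    intro v _
    rw [hTapp]
    simp [hx'def, mul_comm]
  have hnorm : ‖(x' : E)‖ ^ 2 = ss F x := by
    rw [← real_inner_self_eq_norm_sq]
    simp only [PiLp.inner_apply, RCLike.inner_apply, starRingEnd_apply, star_trivial, ss]
    apply Finset.sum_congr rfl
    intro v _
    rw [sq]; simp [hx'def, sq]
  have hsspos : 0 < ss F x := by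
    obtain ⟨v, hv⟩ := Function.ne_iff.mp hx
    have : (0:ℝ) < x v ^ 2 := by
      have := sq_nonneg (x v)
      rcases this.lt_or_eq with h | h
      · exact h
      · exact absurd (pow_eq_zero_iff (by norm_num) |>.mp h.symm) hv
    exact Finset.sum_pos' (fun i _ => sq_nonneg _) ⟨v, Finset.mem_univ v, this⟩
  have : F.lam1 ≤ qf F x / ss F x := by
    refine le_trans (hlam.trans hμle) ?_
    rw [hinner, hnorm]
    simp
  calc F.lam1 * ss F x ≤ (qf F x / ss F x) * ss F x := by
        exact mul_le_mul_of_nonneg_right this hsspos.le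
    _ = qf F x := by field_simp

end RootedGraph

namespace RootedGraph
variable (F : RootedGraph)

lemma sSet_ne [Nonempty F.V] :
    ({t : ℝ | ∃ x : F.V → ℝ, x ≠ 0 ∧ F.adjMat.mulVec x = t • x}).Nonempty := by
  classical
  set E := EuclideanSpace ℝ F.V
  set T : E →ₗ[ℝ] E := Matrix.toEuclideanLin F.adjMat with hT
  have hsym : T.IsSymmetric := Matrix.isHermitian_iff_isSymmetric.mp (adjMat_herm F)
  haveI : Nontrivial E :=
    ⟨⟨(WithLp.equiv 2 (F.V → ℝ)).symm (fun _ => 1), 0, fun h =>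
      one_ne_zero (congrFun (congrArg (WithLp.equiv 2 (F.V → ℝ)) h) (Classical.arbitrary F.V))⟩⟩
  set μ : ℝ := ⨅ y : { y : E // y ≠ 0 }, RCLike.re (inner ℝ (T y) (y : E) : ℝ) / ‖(y : E)‖ ^ 2 with hμ
  have hev : Module.End.HasEigenvalue T μ := hsym.hasEigenvalue_iInf_of_finiteDimensional
  obtain ⟨v, hv⟩ := hev.exists_hasEigenvector
  refine ⟨μ, ⟨WithLp.equiv 2 (F.V → ℝ) v, by simpa using hv.right, ?_⟩⟩
  funext w
  have := congrArg (fun z : E => z w) (Module.End.mem_genEigenspace_one.mp hv.left)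
  rw [WithLp.ofLp_smul] at this
  exact this

lemma le_lam1 [Nonempty F.V] (c : ℝ) (h : ∀ x : F.V → ℝ, c * ss F x ≤ qf F x) :
    c ≤ F.lam1 := by
  refine le_csInf (sSet_ne F) ?_
  rintro t ⟨x, hx, hev⟩
  have hq : qf F x = t * ss F x := by
    simp only [qf, ss, hev, Pi.smul_apply, smul_eq_mul]
    rw [Finset.mul_sum]
    apply Finset.sum_congr rfl
    intro v _; ring
  have hsspos : 0 < ss F x := by
    obtain ⟨v, hv⟩ := Function.ne_iff.mp hx
    refine Finset.sum_pos' (fun i _ => sq_nonneg _) ⟨v, Finset.mem_univ v, ?_⟩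
    rcases (sq_nonneg (x v)).lt_or_eq with h' | h'
    · exact h'
    · exact absurd (pow_eq_zero_iff (by norm_num) |>.mp h'.symm) hv
  have := h x
  rw [hq] at this
  exact le_of_mul_le_mul_right (by linarith) hsspos

lemma lam1_lt (x : F.V → ℝ) (hx : x ≠ 0) (c : ℝ) (h : qf F x < c * ss F x) :
    F.lam1 < c := by
  have h1 := lam1_le_ray F x hx
  have hsspos : 0 < ss F x := by
    obtain ⟨v, hv⟩ := Function.ne_iff.mp hx
    refine Finset.sum_pos' (fun i _ => sq_nonneg _) ⟨v, Finset.mem_univ v, ?_⟩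
    rcases (sq_nonneg (x v)).lt_or_eq with h' | h'
    · exact h'
    · exact absurd (pow_eq_zero_iff (by norm_num) |>.mp h'.symm) hv
  nlinarith

lemma lam1_le (x : F.V → ℝ) (hx : x ≠ 0) (c : ℝ) (h : qf F x ≤ c * ss F x) :
    F.lam1 ≤ c := by
  have h1 := lam1_le_ray F x hx
  have hsspos : 0 < ss F x := by
    obtain ⟨v, hv⟩ := Function.ne_iff.mp hx
    refine Finset.sum_pos' (fun i _ => sq_nonneg _) ⟨v, Finset.mem_univ v, ?_⟩
    rcases (sq_nonneg (x v)).lt_or_eq with h' | h'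
    · exact h'
    · exact absurd (pow_eq_zero_iff (by norm_num) |>.mp h'.symm) hv
  nlinarith

end RootedGraph

namespace RootedGraph

/-! ### Decidability and integer quadratic forms -/

lemma ite_irrel {p : Prop} (h1 h2 : Decidable p) (a b : ℝ) :
    @ite ℝ p h1 a b = @ite ℝ p h2 a b := by
  cases Subsingleton.elim h1 h2; rfl

instance decEqExtend (F : RootedGraph) [DecidableEq F.V] (k : ℕ) : DecidableEq (F.extend k).V :=
  inferInstanceAs (DecidableEq (F.V ⊕ Option (Fin k)))

instance decAdjExtend (F : RootedGraph) [DecidableEq F.V] [DecidableRel F.G.Adj] (k : ℕ) :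
    DecidableRel (F.extend k).G.Adj := fun a b =>
  match a, b with
  | Sum.inl u, Sum.inl w => inferInstanceAs (Decidable (F.G.Adj u w))
  | Sum.inl u, Sum.inr _ => inferInstanceAs (Decidable (u = F.root))
  | Sum.inr _, Sum.inl w => inferInstanceAs (Decidable (w = F.root))
  | Sum.inr o, Sum.inr o' => inferInstanceAs (Decidable (o ≠ o'))

instance pathDec (n : ℕ) : DecidableRel (SimpleGraph.pathGraph n).Adj := fun _ _ =>
  decidable_of_iff _ (SimpleGraph.pathGraph_adj).symm

instance : DecidableEq F1.V := inferInstanceAs (DecidableEq (Fin 4))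
instance : DecidableRel F1.G.Adj := inferInstanceAs (DecidableRel (SimpleGraph.pathGraph 4).Adj)
instance : DecidableEq F3.V := inferInstanceAs (DecidableEq (Fin 6))
instance : DecidableRel F3.G.Adj := inferInstanceAs (DecidableRel (SimpleGraph.pathGraph 6).Adj)
instance : DecidableEq F2.V := inferInstanceAs (DecidableEq (Fin 5))
instance : DecidableRel F2.G.Adj := fun a b =>
  decidable_of_iff _ (SimpleGraph.fromRel_adj _ a b).symm

lemma adjMat_apply (F : RootedGraph) [inst : DecidableRel F.G.Adj] (v w : F.V) :
    F.adjMat v w = if F.G.Adj v w then 1 else 0 :=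
  ite_irrel _ _ _ _

def qfZ (F : RootedGraph) [DecidableRel F.G.Adj] (x : F.V → ℤ) : ℤ :=
  ∑ v, ∑ w, (if F.G.Adj v w then x v * x w else 0)

def ssZ (F : RootedGraph) (x : F.V → ℤ) : ℤ := ∑ v, x v ^ 2

lemma qf_intCast (F : RootedGraph) [DecidableRel F.G.Adj] (x : F.V → ℤ) :
    qf F (fun v => (x v : ℝ)) = ((qfZ F x : ℤ) : ℝ) := by
  unfold qf qfZ
  push_cast
  apply Finset.sum_congr rfl
  intro v _
  simp only [Matrix.mulVec, dotProduct]
  rw [Finset.mul_sum]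
  apply Finset.sum_congr rfl
  intro w _
  rw [adjMat_apply]
  split <;> push_cast <;> ring

lemma ss_intCast (F : RootedGraph) (x : F.V → ℤ) :
    ss F (fun v => (x v : ℝ)) = ((ssZ F x : ℤ) : ℝ) := by
  unfold ss ssZ
  push_cast
  rfl

lemma ne_zero_of_ss_pos (F : RootedGraph) (x : F.V → ℝ) (h : 0 < ss F x) : x ≠ 0 := by
  intro h0
  rw [h0] at h
  simp [ss] at h

/-! ### Structure of `extend 0` -/

lemma rowing_nil (F : RootedGraph) : F.rowing [] = F := rfl
lemma rowing_cons (F : RootedGraph) (a : ℕ) (l : List ℕ) :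
    F.rowing (a :: l) = (F.extend a).rowing l := rfl
lemma rowing_append (F : RootedGraph) (l₁ l₂ : List ℕ) :
    F.rowing (l₁ ++ l₂) = (F.rowing l₁).rowing l₂ := List.foldl_append

lemma nonempty_rowing : ∀ (l : List ℕ) (F : RootedGraph), Nonempty F.V →
    Nonempty (F.rowing l).V
  | [], _, h => h
  | _ :: l, F, _ => nonempty_rowing l (F.extend _) ⟨Sum.inr none⟩

lemma extend_root (F : RootedGraph) (k : ℕ) : (F.extend k).root = Sum.inr none := rfl

lemma sum_extend0 (F : RootedGraph) (f : (F.extend 0).V → ℝ) :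
    ∑ v, f v = (∑ v, f (Sum.inl v)) + f (Sum.inr none) := by
  rw [show (∑ v, f v) = (∑ v, f (Sum.inl v)) + ∑ o : Option (Fin 0), f (Sum.inr o) from
    Fintype.sum_sum_type _, Fintype.sum_option]
  simp

open scoped Classical in
lemma adj_extend0_inl_inl (F : RootedGraph) (u w : F.V) :
    (F.extend 0).adjMat (Sum.inl u) (Sum.inl w) = F.adjMat u w :=
  ite_irrel _ _ _ _

open scoped Classical in
lemma adj_extend0_inl_inr (F : RootedGraph) (u : F.V) :
    (F.extend 0).adjMat (Sum.inl u) (Sum.inr none) = if u = F.root then 1 else 0 :=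
  ite_irrel _ _ _ _

open scoped Classical in
lemma adj_extend0_inr_inl (F : RootedGraph) (w : F.V) :
    (F.extend 0).adjMat (Sum.inr none) (Sum.inl w) = if w = F.root then 1 else 0 :=
  ite_irrel _ _ _ _

lemma adj_extend0_inr_inr (F : RootedGraph) :
    (F.extend 0).adjMat (Sum.inr none) (Sum.inr none) = 0 := by
  unfold adjMat
  refine if_neg ?_
  intro h
  exact h rfl

open scoped Classical in
lemma mulVec_extend0_inl (F : RootedGraph) (y : (F.extend 0).V → ℝ) (v : F.V) :
    (F.extend 0).adjMat.mulVec y (Sum.inl v) =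
      F.adjMat.mulVec (fun w => y (Sum.inl w)) v + (if v = F.root then y (Sum.inr none) else 0) := by
  simp only [Matrix.mulVec, dotProduct]
  rw [sum_extend0 F (fun w => (F.extend 0).adjMat (Sum.inl v) w * y w)]
  rw [Finset.sum_congr rfl (fun w _ => by rw [adj_extend0_inl_inl F v w] :
    ∀ w ∈ Finset.univ, (F.extend 0).adjMat (Sum.inl v) (Sum.inl w) * y (Sum.inl w)
      = F.adjMat v w * y (Sum.inl w))]
  rw [adj_extend0_inl_inr]
  split <;> simp

lemma mulVec_extend0_inr (F : RootedGraph) (y : (F.extend 0).V → ℝ) :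
    (F.extend 0).adjMat.mulVec y (Sum.inr none) = y (Sum.inl F.root) := by
  classical
  simp only [Matrix.mulVec, dotProduct]
  rw [sum_extend0 F (fun w => (F.extend 0).adjMat (Sum.inr none) w * y w)]
  rw [adj_extend0_inr_inr, zero_mul, add_zero]
  rw [Finset.sum_congr rfl (fun w _ => by rw [adj_extend0_inr_inl F w])]
  simp [ite_mul]

lemma ss_extend0 (F : RootedGraph) (y : (F.extend 0).V → ℝ) :
    ss (F.extend 0) y = ss F (fun v => y (Sum.inl v)) + (y (Sum.inr none)) ^ 2 :=
  sum_extend0 F (fun v => y v ^ 2)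

open scoped Classical in
lemma qf_extend0 (F : RootedGraph) (y : (F.extend 0).V → ℝ) :
    qf (F.extend 0) y = qf F (fun v => y (Sum.inl v))
      + 2 * y (Sum.inr none) * y (Sum.inl F.root) := by
  unfold qf
  rw [sum_extend0 F (fun v => y v * (F.extend 0).adjMat.mulVec y v)]
  rw [mulVec_extend0_inr]
  rw [Finset.sum_congr rfl (fun v _ => by rw [mulVec_extend0_inl, mul_add])]
  rw [Finset.sum_add_distrib]
  have h2 : ∑ v : F.V, y (Sum.inl v) * (if v = F.root then y (Sum.inr none) else 0)
      = y (Sum.inl F.root) * y (Sum.inr none) := by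
    simp [mul_ite]
  rw [h2]
  ring

end RootedGraph

namespace RootedGraph

/-! ### The PSD-certificate invariant -/

def Inv (F : RootedGraph) (lam gam : ℝ) : Prop :=
  ∀ x : F.V → ℝ, gam * x F.root ^ 2 ≤ lam * ss F x + qf F x

lemma Inv.extend0 {F : RootedGraph} {lam gam : ℝ} (h : Inv F lam gam) (hg : 0 < gam)
    (hq : gam ^ 2 - lam * gam + 1 ≤ 0) : Inv (F.extend 0) lam gam := by
  intro y
  have hx := h (fun v => y (Sum.inl v))
  rw [ss_extend0, qf_extend0, extend_root]
  set a := y (Sum.inr none)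
  set r := y (Sum.inl F.root)
  nlinarith [sq_nonneg (gam * r + a), sq_nonneg a, mul_nonneg hg.le (sq_nonneg a)]

lemma Inv.rowing0 {lam gam : ℝ} (hg : 0 < gam) (hq : gam ^ 2 - lam * gam + 1 ≤ 0) :
    ∀ (n : ℕ) (F : RootedGraph), Inv F lam gam →
      Inv (F.rowing (List.replicate n 0)) lam gam
  | 0, _, h => h
  | n + 1, F, h => by
    rw [List.replicate_succ, rowing_cons]
    exact Inv.rowing0 hg hq n (F.extend 0) (h.extend0 hg hq)

lemma lam1_ge_of_inv (F : RootedGraph) [Nonempty F.V] {lam gam : ℝ} (hg : 0 ≤ gam)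
    (h : Inv F lam gam) : -lam ≤ F.lam1 := by
  apply le_lam1
  intro x
  have h1 := h x
  nlinarith [sq_nonneg (x F.root)]

lemma L_ge_of_inv (F : RootedGraph) [Nonempty F.V] {lam gam L : ℝ} (hg : 0 < gam)
    (hq : gam ^ 2 - lam * gam + 1 ≤ 0) (h : Inv F lam gam)
    (hL : Filter.Tendsto (fun n : ℕ => (F.rowing (List.replicate n 0)).lam1)
      Filter.atTop (nhds L)) : -lam ≤ L := by
  refine ge_of_tendsto' hL ?_
  intro n
  haveI : Nonempty (F.rowing (List.replicate n 0)).V :=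
    nonempty_rowing _ F inferInstance
  exact lam1_ge_of_inv _ hg.le (Inv.rowing0 hg hq n F h)

/-! ### Explicit quadratic forms of the base graphs -/

lemma qf_eq (F : RootedGraph) (x : F.V → ℝ) :
    qf F x = ∑ v, ∑ w, F.adjMat v w * (x v * x w) := by
  unfold qf
  apply Finset.sum_congr rfl
  intro v _
  simp only [Matrix.mulVec, dotProduct]
  rw [Finset.mul_sum]
  apply Finset.sum_congr rfl
  intro w _
  ring

lemma qf_F1 (x : Fin 4 → ℝ) :
    qf F1 x = 2 * (x 0 * x 1 + x 1 * x 2 + x 2 * x 3) := by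
  rw [qf_eq F1 x]
  show (∑ v : Fin 4, ∑ w : Fin 4, F1.adjMat v w * (x v * x w)) = _
  have hA : ∀ v w : Fin 4, F1.adjMat v w = if (SimpleGraph.pathGraph 4).Adj v w then 1 else 0 :=
    fun v w => (adjMat_apply F1 v w).trans (ite_irrel _ _ _ _)
  simp only [Fin.sum_univ_four, hA]
  simp (config := { decide := true }) only [ite_true, ite_false]
  ring

lemma ss_F1 (x : Fin 4 → ℝ) : ss F1 x = x 0 ^ 2 + x 1 ^ 2 + x 2 ^ 2 + x 3 ^ 2 := by
  unfold ss
  exact Fin.sum_univ_four _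

lemma root_F1 : F1.root = (2 : Fin 4) := rfl

lemma qf_F3 (x : Fin 6 → ℝ) :
    qf F3 x = 2 * (x 0 * x 1 + x 1 * x 2 + x 2 * x 3 + x 3 * x 4 + x 4 * x 5) := by
  rw [qf_eq F3 x]
  show (∑ v : Fin 6, ∑ w : Fin 6, F3.adjMat v w * (x v * x w)) = _
  have hA : ∀ v w : Fin 6, F3.adjMat v w = if (SimpleGraph.pathGraph 6).Adj v w then 1 else 0 :=
    fun v w => (adjMat_apply F3 v w).trans (ite_irrel _ _ _ _)
  simp only [Fin.sum_univ_six, hA]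
  simp (config := { decide := true }) only [ite_true, ite_false]
  ring

lemma ss_F3 (x : Fin 6 → ℝ) :
    ss F3 x = x 0 ^ 2 + x 1 ^ 2 + x 2 ^ 2 + x 3 ^ 2 + x 4 ^ 2 + x 5 ^ 2 := by
  unfold ss
  exact Fin.sum_univ_six _

lemma root_F3 : F3.root = (4 : Fin 6) := rfl

lemma qf_F2 (x : Fin 5 → ℝ) :
    qf F2 x = 2 * (x 0 * x 1 + x 1 * x 2 + x 2 * x 3
      + x 4 * x 0 + x 4 * x 1 + x 4 * x 2 + x 4 * x 3) := by
  rw [qf_eq F2 x]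
  show (∑ v : Fin 5, ∑ w : Fin 5, F2.adjMat v w * (x v * x w)) = _
  have hA : ∀ v w : Fin 5, F2.adjMat v w = if (v ≠ w ∧ (((v.val + 1 = w.val ∧ w.val ≤ 3) ∨ v.val = 4) ∨
      ((w.val + 1 = v.val ∧ v.val ≤ 3) ∨ w.val = 4))) then 1 else 0 :=
    fun v w => by classical exact (ite_irrel _ _ _ _).trans (if_congr (SimpleGraph.fromRel_adj _ _ _) rfl rfl)
  simp only [Fin.sum_univ_five, hA]
  simp (config := { decide := true }) only [ite_true, ite_false]
  ring

lemma ss_F2 (x : Fin 5 → ℝ) :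
    ss F2 x = x 0 ^ 2 + x 1 ^ 2 + x 2 ^ 2 + x 3 ^ 2 + x 4 ^ 2 := by
  unfold ss
  exact Fin.sum_univ_five _

lemma root_F2 : F2.root = (4 : Fin 5) := rfl

/-! ### Base certificates -/

lemma inv_F1 (s : ℝ) (hs : 1 < s) (h6 : s ^ 6 = s ^ 2 + 1) :
    Inv F1 ((s ^ 2 + 1) / s) (1 / s) := by
  intro x
  have hs0 : (0:ℝ) < s := lt_trans one_pos hs
  rw [qf_F1 x, ss_F1 x, root_F1]
  set x0 := x (0 : Fin 4)
  set x1 := x (1 : Fin 4)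
  set x2 := x (2 : Fin 4)
  set x3 := x (3 : Fin 4)
  have key : (s^2+1) * (s^4+s^2+1) *
      ((s^2+1) * (x0^2 + x1^2 + x2^2 + x3^2)
        + 2*s*(x0*x1 + x1*x2 + x2*x3) - x2^2)
      = (s^4+s^2+1) * ((s^2+1)*x0 + s*x1)^2
        + ((s^4+s^2+1)*x1 + s*(s^2+1)*x2)^2
        + (s^4+s^2+1) * ((s^2+1)*x3 + s*x2)^2 := by
    linear_combination (s^2 * x2^2) * h6
  have hpos : (0:ℝ) < (s^2+1) * (s^4+s^2+1) := by positivity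
  have hR : 0 ≤ (s^2+1) * (x0^2 + x1^2 + x2^2 + x3^2)
      + 2*s*(x0*x1 + x1*x2 + x2*x3) - x2^2 := by
    have h1 : 0 ≤ (s^2+1) * (s^4+s^2+1) *
        ((s^2+1) * (x0^2 + x1^2 + x2^2 + x3^2)
          + 2*s*(x0*x1 + x1*x2 + x2*x3) - x2^2) := by
      rw [key]; positivity
    have h2 := div_nonneg h1 hpos.le
    rwa [mul_div_cancel_left₀ _ hpos.ne'] at h2
  have hexp : (s^2+1)/s * (x0^2 + x1^2 + x2^2 + x3^2)
      + 2 * (x0*x1 + x1*x2 + x2*x3) - (1/s) * x2^2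
      = ((s^2+1) * (x0^2 + x1^2 + x2^2 + x3^2)
        + 2*s*(x0*x1 + x1*x2 + x2*x3) - x2^2) / s := by
    field_simp
  have h2 := div_nonneg hR hs0.le
  linarith [hexp ▸ h2]

lemma inv_F2 : Inv F2 (885/436 : ℝ) (526/625 : ℝ) := by
  intro x
  rw [qf_F2 x, ss_F2 x, root_F2]
  set x0 := x (0 : Fin 5)
  set x1 := x (1 : Fin 5)
  set x2 := x (2 : Fin 5)
  set x3 := x (3 : Fin 5)
  set x4 := x (4 : Fin 5)
  nlinarith [sq_nonneg (x0 + 436/885 * x1 + 436/885 * x4),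
    sq_nonneg (x1 + 385860/593129 * x2 + 436/1321 * x4),
    sq_nonneg (x2 + 258604244/356684205 * x3 + 195764/403033 * x4),
    sq_nonneg (x3 + 385860/978989 * x4), sq_nonneg x4]

lemma inv_F3 : Inv F3 (2537/1240 : ℝ) (461/571 : ℝ) := by
  intro x
  rw [qf_F3 x, ss_F3 x, root_F3]
  set x0 := x (0 : Fin 6)
  set x1 := x (1 : Fin 6)
  set x2 := x (2 : Fin 6)
  set x3 := x (3 : Fin 6)
  set x4 := x (4 : Fin 6)
  set x5 := x (5 : Fin 6)
  nlinarith [sq_nonneg (x0 + 1240/2537 * x1),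
    sq_nonneg (x1 + 3145880/4898769 * x2),
    sq_nonneg (x2 + 6074473560/8527285753 * x3),
    sq_nonneg (x3 + 10573834333720/14101376740961 * x4),
    sq_nonneg (1240/2537 * x4 + x5), sq_nonneg x4]

lemma gam_lam_F2 : (526/625 : ℝ) ^ 2 - (885/436) * (526/625) + 1 ≤ 0 := by norm_num
lemma gam_lam_F3 : (461/571 : ℝ) ^ 2 - (2537/1240) * (461/571) + 1 ≤ 0 := by norm_num

end RootedGraph

namespace RootedGraph

/-! ### Zero extension: quadratic form data propagates along the 0-rowing -/

lemma zero_ext : ∀ (n : ℕ) (F : RootedGraph) (x : F.V → ℝ),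
    ∃ y : (F.rowing (List.replicate n 0)).V → ℝ,
      ss (F.rowing (List.replicate n 0)) y = ss F x ∧
      qf (F.rowing (List.replicate n 0)) y = qf F x
  | 0, _, x => ⟨x, rfl, rfl⟩
  | n + 1, F, x => by
    rw [List.replicate_succ, rowing_cons]
    obtain ⟨y, hss, hqf⟩ := zero_ext n (F.extend 0) (Sum.elim x (fun _ => 0))
    refine ⟨y, ?_, ?_⟩
    · rw [hss, ss_extend0 F (Sum.elim x (fun _ => 0))]
      simp [ss]
    · rw [hqf, qf_extend0 F (Sum.elim x (fun _ => 0))]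
      simp [qf]

/-- From a test vector on `F.rowing (0^N)`, a bound on the limit `L`. -/
lemma L_le_of_vec (F : RootedGraph) {L : ℝ} (N : ℕ)
    (hL : Filter.Tendsto (fun n : ℕ => (F.rowing (List.replicate n 0)).lam1)
      Filter.atTop (nhds L))
    (x : (F.rowing (List.replicate N 0)).V → ℝ) (c : ℝ)
    (hss : 0 < ss _ x) (hqf : qf _ x ≤ c * ss _ x) : L ≤ c := by
  have hmain : ∀ m : ℕ, (F.rowing (List.replicate (N + m) 0)).lam1 ≤ c := by
    intro m
    rw [show N + m = N + m from rfl, List.replicate_add, rowing_append]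
    obtain ⟨y, hss', hqf'⟩ := zero_ext m (F.rowing (List.replicate N 0)) x
    apply lam1_le _ y (ne_zero_of_ss_pos _ y (by rw [hss']; exact hss))
    rw [hss', hqf']
    exact hqf
  have hcomp : Filter.Tendsto (fun m : ℕ => (F.rowing (List.replicate (N + m) 0)).lam1)
      Filter.atTop (nhds L) := by
    have h1 : Filter.Tendsto (fun m : ℕ => N + m) Filter.atTop Filter.atTop := by
      apply Filter.tendsto_atTop_mono (fun m => Nat.le_add_left m N) Filter.tendsto_id
    exact hL.comp h1
  exact le_of_tendsto' hcomp hmain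

/-! ### The approximate-eigenvector family for the `0`-rowing of `F1` -/

open scoped Classical in
/-- The defect-eigenvector invariant: `A x = -λ x + (x_root/s)·e_root`. -/
def Heig (F : RootedGraph) (lam s : ℝ) (x : F.V → ℝ) : Prop :=
  ∀ v, F.adjMat.mulVec x v = -lam * x v
    + (if v = F.root then x F.root / s else 0)

lemma heig_step (F : RootedGraph) (lam s : ℝ) (hs : 1 < s) (hlam : lam = s + 1/s)
    (x : F.V → ℝ) (hx : Heig F lam s x) :
    Heig (F.extend 0) lam s (Sum.elim x (fun _ : Option (Fin 0) => -(x F.root)/s)) := by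
  have hs0 : (0:ℝ) < s := lt_trans one_pos hs
  intro v
  match v with
  | Sum.inl u =>
    rw [mulVec_extend0_inl F (Sum.elim x (fun _ : Option (Fin 0) => -(x F.root)/s))]
    have h1 : (fun w => Sum.elim x (fun _ : Option (Fin 0) => -(x F.root)/s) (Sum.inl w)) = x := rfl
    rw [h1, hx u]
    rw [show (@Eq (F.extend 0).V (Sum.inl u) (F.extend 0).root) ↔ False by
      simp [extend_root]]
    simp only [if_false]
    split_ifs with h
    · subst h
      simp only [Sum.elim_inl, Sum.elim_inr]
      ring
    · simp
  | Sum.inr o =>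
    match o with
    | none =>
      rw [mulVec_extend0_inr F (Sum.elim x (fun _ : Option (Fin 0) => -(x F.root)/s))]
      rw [show (@Eq (F.extend 0).V (Sum.inr none) (F.extend 0).root) ↔ True by
        exact iff_true_intro rfl]
      simp only [if_true]
      show x F.root = -lam * (-(x F.root)/s) + (-(x F.root)/s)/s
      rw [hlam]
      field_simp
      ring

lemma heig_family : ∀ (n : ℕ) (F : RootedGraph) (lam s : ℝ), 1 < s → lam = s + 1/s →
    ∀ x : F.V → ℝ, Heig F lam s x →
    ∃ y : (F.rowing (List.replicate n 0)).V → ℝ,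
      Heig (F.rowing (List.replicate n 0)) lam s y ∧
      ss F x ≤ ss (F.rowing (List.replicate n 0)) y ∧
      (y (F.rowing (List.replicate n 0)).root) ^ 2 ≤ (x F.root) ^ 2 * ((1/s^2) ^ n)
  | 0, F, lam, s, hs, hlam, x, hx => ⟨x, hx, le_refl _, by
      norm_num
      exact le_of_eq rfl⟩
  | n + 1, F, lam, s, hs, hlam, x, hx => by
    have hs0 : (0:ℝ) < s := lt_trans one_pos hs
    rw [List.replicate_succ, rowing_cons]
    obtain ⟨y, hy, hss, hroot⟩ := heig_family n (F.extend 0) lam s hs hlam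
      (Sum.elim x (fun _ : Option (Fin 0) => -(x F.root)/s)) (heig_step F lam s hs hlam x hx)
    refine ⟨y, hy, ?_, ?_⟩
    · refine le_trans ?_ hss
      rw [ss_extend0 F (Sum.elim x (fun _ : Option (Fin 0) => -(x F.root)/s))]
      have h1 : (fun v => Sum.elim x (fun _ : Option (Fin 0) => -(x F.root)/s) (Sum.inl v)) = x := rfl
      rw [h1]
      nlinarith [sq_nonneg (Sum.elim x (fun _ : Option (Fin 0) => -(x F.root)/s) (Sum.inr none))]
    · refine le_trans hroot ?_
      have h2 : Sum.elim x (fun _ : Option (Fin 0) => -(x F.root)/s) ((F.extend 0).root)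
          = -(x F.root)/s := rfl
      rw [h2]
      rw [show (-(x F.root)/s)^2 = (x F.root)^2 * (1/s^2) by rw [div_pow, neg_sq]; ring]
      rw [show (1/s^2 : ℝ)^(n+1) = (1/s^2) * (1/s^2)^n by ring]
      have h3 : (0:ℝ) ≤ (1/s^2)^n := by positivity
      nlinarith [sq_nonneg (x F.root)]

lemma qf_of_heig (F : RootedGraph) (lam s : ℝ) (x : F.V → ℝ) (hx : Heig F lam s x) :
    qf F x = -lam * ss F x + (x F.root) ^ 2 / s := by
  classical
  unfold qf ss
  rw [Finset.sum_congr rfl (fun v _ => by rw [hx v] :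
    ∀ v ∈ Finset.univ, x v * F.adjMat.mulVec x v
      = x v * (-lam * x v + (if v = F.root then x F.root / s else 0)))]
  rw [Finset.sum_congr rfl (fun v _ => by ring :
    ∀ v ∈ Finset.univ, x v * (-lam * x v + (if v = F.root then x F.root / s else 0))
      = -lam * x v ^ 2 + x v * (if v = F.root then x F.root / s else 0))]
  rw [Finset.sum_add_distrib]
  congr 1
  · rw [← Finset.mul_sum]
  · simp [mul_ite]
    ring

/-- Limit upper bound from the defect-eigenvector family. -/
lemma L_le_of_heig (F : RootedGraph) {L lam s : ℝ} (hs : 1 < s) (hlam : lam = s + 1/s)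
    (x : F.V → ℝ) (hx : Heig F lam s x) (hss : 0 < ss F x)
    (hroot : (x F.root) ^ 2 ≤ ss F x)
    (hL : Filter.Tendsto (fun n : ℕ => (F.rowing (List.replicate n 0)).lam1)
      Filter.atTop (nhds L)) : L ≤ -lam := by
  have hs0 : (0:ℝ) < s := lt_trans one_pos hs
  have hbound : ∀ n : ℕ, (F.rowing (List.replicate n 0)).lam1 ≤ -lam + (1/s^2)^n := by
    intro n
    obtain ⟨y, hy, hssy, hrooty⟩ := heig_family n F lam s hs hlam x hx
    have hssy0 : 0 < ss _ y := lt_of_lt_of_le hss hssy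
    apply lam1_le _ y (ne_zero_of_ss_pos _ y hssy0)
    rw [qf_of_heig _ lam s y hy]
    have h1 : (y (F.rowing (List.replicate n 0)).root) ^ 2 / s ≤ (1/s^2)^n * ss _ y := by
      rw [div_le_iff₀ hs0]
      calc (y (F.rowing (List.replicate n 0)).root) ^ 2
          ≤ (x F.root) ^ 2 * ((1/s^2) ^ n) := hrooty
        _ ≤ (1/s^2)^n * ss F x := by
            have hp : (0:ℝ) ≤ (1/s^2)^n := by positivity
            nlinarith
        _ ≤ (1/s^2)^n * ss _ y := by
            have : (0:ℝ) ≤ (1/s^2)^n := by positivity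
            nlinarith
        _ ≤ (1/s^2)^n * ss _ y * s := by
            have h2 : (0:ℝ) ≤ (1/s^2)^n * ss _ y := by positivity
            nlinarith
    linarith [h1, mul_le_mul_of_nonneg_right (le_refl (1:ℝ)) hssy0.le]
  have htend : Filter.Tendsto (fun n : ℕ => -lam + (1/s^2)^n) Filter.atTop
      (nhds (-lam)) := by
    have h1 : (0:ℝ) ≤ 1/s^2 := by positivity
    have h2 : (1:ℝ)/s^2 < 1 := by
      rw [div_lt_one (by positivity)]
      nlinarith
    have h3 := tendsto_pow_atTop_nhds_zero_of_lt_one h1 h2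
    have h4 := h3.const_add (-lam)
    simpa using h4
  exact le_of_tendsto_of_tendsto' hL htend hbound

end RootedGraph

namespace RootedGraph

def st (c p : ℤ) : Option (Fin 1) → ℤ := fun o => match o with | none => p | some _ => c
def st0 (p : ℤ) : Option (Fin 0) → ℤ := fun _ => p

instance : DecidableEq (F1.rowing (List.replicate 8 1)).V := inferInstanceAs (DecidableEq ((((((((F1.extend 1).extend 1).extend 1).extend 1).extend 1).extend 1).extend 1).extend 1).V)
instance : DecidableRel (F1.rowing (List.replicate 8 1)).G.Adj := inferInstanceAs (DecidableRel ((((((((F1.extend 1).extend 1).extend 1).extend 1).extend 1).extend 1).extend 1).extend 1).G.Adj)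
def xvP1 : (F1.rowing (List.replicate 8 1)).V → ℤ :=
  (Sum.elim (Sum.elim (Sum.elim (Sum.elim (Sum.elim (Sum.elim (Sum.elim (Sum.elim (![-385, 781, -1200, 591] : Fin 4 → ℤ) (st (132) (932))) (st (-105) (-719))) (st (84) (549))) (st (-68) (-411))) (st (56) (297))) (st (-47) (-201))) (st (42) (116))) (st (-38) (-38)))
lemma qsP1 : qfZ (F1.rowing (List.replicate 8 1)) xvP1 = (-9328572) ∧ ssZ (F1.rowing (List.replicate 8 1)) xvP1 = 4595566 := by
  constructor <;> decide
lemma p1bound : (F1.rowing (List.replicate 8 1)).lam1 < -(136/67 : ℝ) := by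
  have e1 := qsP1.1
  have e2 := qsP1.2
  apply lam1_lt _ (fun v => ((xvP1 v : ℤ) : ℝ)) (ne_zero_of_ss_pos _ _ (by rw [ss_intCast, e2]; norm_num))
  rw [qf_intCast, ss_intCast, e1, e2]
  norm_num

instance : DecidableEq (F2.rowing (List.replicate 7 1)).V := inferInstanceAs (DecidableEq (((((((F2.extend 1).extend 1).extend 1).extend 1).extend 1).extend 1).extend 1).V)
instance : DecidableRel (F2.rowing (List.replicate 7 1)).G.Adj := inferInstanceAs (DecidableRel (((((((F2.extend 1).extend 1).extend 1).extend 1).extend 1).extend 1).extend 1).G.Adj)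
def xvP2 : (F2.rowing (List.replicate 7 1)).V → ℤ :=
  (Sum.elim (Sum.elim (Sum.elim (Sum.elim (Sum.elim (Sum.elim (Sum.elim (![313, 160, 160, 313, -800] : Fin 5 → ℤ) (st (104) (588))) (st (-78) (-428))) (st (59) (307))) (st (-45) (-215))) (st (36) (141))) (st (-30) (-80))) (st (26) (26)))
lemma qsP2 : qfZ (F2.rowing (List.replicate 7 1)) xvP2 = (-3291770) ∧ ssZ (F2.rowing (List.replicate 7 1)) xvP2 = 1608775 := by
  constructor <;> decide
lemma p2bound : (F2.rowing (List.replicate 7 1)).lam1 < -(178/87 : ℝ) := by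
  have e1 := qsP2.1
  have e2 := qsP2.2
  apply lam1_lt _ (fun v => ((xvP2 v : ℤ) : ℝ)) (ne_zero_of_ss_pos _ _ (by rw [ss_intCast, e2]; norm_num))
  rw [qf_intCast, ss_intCast, e1, e2]
  norm_num

instance : DecidableEq (F3.rowing (List.replicate 4 1)).V := inferInstanceAs (DecidableEq ((((F3.extend 1).extend 1).extend 1).extend 1).V)
instance : DecidableRel (F3.rowing (List.replicate 4 1)).G.Adj := inferInstanceAs (DecidableRel ((((F3.extend 1).extend 1).extend 1).extend 1).G.Adj)
def xvP3 : (F3.rowing (List.replicate 4 1)).V → ℤ :=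
  (Sum.elim (Sum.elim (Sum.elim (Sum.elim (![-64, 132, -207, 295, -400, 194] : Fin 6 → ℤ) (st (62) (272))) (st (-47) (-175))) (st (37) (98))) (st (-32) (-32)))
lemma qsP3 : qfZ (F3.rowing (List.replicate 4 1)) xvP3 = (-973158) ∧ ssZ (F3.rowing (List.replicate 4 1)) xvP3 = 472713 := by
  constructor <;> decide
lemma p3bound : (F3.rowing (List.replicate 4 1)).lam1 < -Real.sqrt (2 + Real.sqrt 5) := by
  have e1 := qsP3.1
  have e2 := qsP3.2
  apply lam1_lt _ (fun v => ((xvP3 v : ℤ) : ℝ)) (ne_zero_of_ss_pos _ _ (by rw [ss_intCast, e2]; norm_num))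
  rw [qf_intCast, ss_intCast, e1, e2]
  have h5 : Real.sqrt 5 < 223609/100000 := by
    rw [show (223609/100000 : ℝ) = 223609/100000 from rfl]
    rw [Real.sqrt_lt' (by norm_num)]
    norm_num
  have hb : Real.sqrt (2 + Real.sqrt 5) < 973158/472713 := by
    rw [Real.sqrt_lt' (by norm_num)]
    nlinarith [h5]
  push_cast
  nlinarith [hb, Real.sqrt_nonneg (2 + Real.sqrt 5)]

instance : DecidableEq (F2.rowing (List.replicate 8 0)).V := inferInstanceAs (DecidableEq ((((((((F2.extend 0).extend 0).extend 0).extend 0).extend 0).extend 0).extend 0).extend 0).V)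
instance : DecidableRel (F2.rowing (List.replicate 8 0)).G.Adj := inferInstanceAs (DecidableRel ((((((((F2.extend 0).extend 0).extend 0).extend 0).extend 0).extend 0).extend 0).extend 0).G.Adj)
def xvL2up : (F2.rowing (List.replicate 8 0)).V → ℤ :=
  (Sum.elim (Sum.elim (Sum.elim (Sum.elim (Sum.elim (Sum.elim (Sum.elim (Sum.elim (![40, 20, 20, 40, -100] : Fin 5 → ℤ) (st0 (83))) (st0 (-69))) (st0 (56))) (st0 (-45))) (st0 (35))) (st0 (-25))) (st0 (16))) (st0 (-8)))
lemma qsL2up : qfZ (F2.rowing (List.replicate 8 0)) xvL2up = (-66778) ∧ ssZ (F2.rowing (List.replicate 8 0)) xvL2up = 32981 := by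
  constructor <;> decide
lemma l2vec : (F2.rowing (List.replicate 8 0)).lam1 ≤ -(201/100 : ℝ) := by
  have e1 := qsL2up.1
  have e2 := qsL2up.2
  apply lam1_le _ (fun v => ((xvL2up v : ℤ) : ℝ)) (ne_zero_of_ss_pos _ _ (by rw [ss_intCast, e2]; norm_num))
  rw [qf_intCast, ss_intCast, e1, e2]
  norm_num

instance : DecidableEq (F3.rowing (List.replicate 10 0)).V := inferInstanceAs (DecidableEq ((((((((((F3.extend 0).extend 0).extend 0).extend 0).extend 0).extend 0).extend 0).extend 0).extend 0).extend 0).V)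
instance : DecidableRel (F3.rowing (List.replicate 10 0)).G.Adj := inferInstanceAs (DecidableRel ((((((((((F3.extend 0).extend 0).extend 0).extend 0).extend 0).extend 0).extend 0).extend 0).extend 0).extend 0).G.Adj)
def xvL3up : (F3.rowing (List.replicate 10 0)).V → ℤ :=
  (Sum.elim (Sum.elim (Sum.elim (Sum.elim (Sum.elim (Sum.elim (Sum.elim (Sum.elim (Sum.elim (Sum.elim (![-17, 34, -54, 75, -100, 49] : Fin 6 → ℤ) (st0 (81))) (st0 (-65))) (st0 (52))) (st0 (-41))) (st0 (32))) (st0 (-25))) (st0 (19))) (st0 (-13))) (st0 (9))) (st0 (-4)))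
lemma qsL3up : qfZ (F3.rowing (List.replicate 10 0)) xvL3up = (-81456) ∧ ssZ (F3.rowing (List.replicate 10 0)) xvL3up = 39834 := by
  constructor <;> decide
lemma l3vec : (F3.rowing (List.replicate 10 0)).lam1 ≤ -(201/100 : ℝ) := by
  have e1 := qsL3up.1
  have e2 := qsL3up.2
  apply lam1_le _ (fun v => ((xvL3up v : ℤ) : ℝ)) (ne_zero_of_ss_pos _ _ (by rw [ss_intCast, e2]; norm_num))
  rw [qf_intCast, ss_intCast, e1, e2]
  norm_num

end RootedGraph

namespace RootedGraph

lemma mulVec_F1 (x : Fin 4 → ℝ) (v : Fin 4) :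
    F1.adjMat.mulVec x v = ![x 1, x 0 + x 2, x 1 + x 3, x 2] v := by
  simp only [Matrix.mulVec, dotProduct]
  show (∑ w : Fin 4, F1.adjMat v w * x w) = _
  rw [Fin.sum_univ_four]
  have hA : ∀ v w : Fin 4, F1.adjMat v w = if (SimpleGraph.pathGraph 4).Adj v w then 1 else 0 :=
    fun v w => (adjMat_apply F1 v w).trans (ite_irrel _ _ _ _)
  fin_cases v <;>
    simp (config := { decide := true }) only [hA, ite_true, ite_false] <;>
    norm_num

lemma heig_F1 (s : ℝ) (hs : 1 < s) (h6 : s ^ 6 = s ^ 2 + 1) :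
    Heig F1 ((s^2+1)/s) s
      ![s^2*(s^2+1), -(s*(s^2+1)^2), (s^4+s^2+1)*(s^2+1), -(s*(s^4+s^2+1))] := by
  have hs0 : (0:ℝ) < s := lt_trans one_pos hs
  intro v
  erw [mulVec_F1]
  rw [show (![s^2*(s^2+1), -(s*(s^2+1)^2), (s^4+s^2+1)*(s^2+1), -(s*(s^4+s^2+1))] :
    Fin 4 → ℝ) F1.root = (s^4+s^2+1)*(s^2+1) from rfl]
  rw [show F1.root = (2 : Fin 4) from rfl]
  fin_cases v <;>
    simp (config := { decide := true }) only [show ∀ a b : Fin 4, (@Eq F1.V a b) = (a = b) from fun _ _ => rfl,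
      ite_true, ite_false, Matrix.cons_val_zero, Matrix.cons_val_one, Matrix.cons_val_two, Matrix.cons_val_three, Matrix.head_cons, Matrix.tail_cons] <;> norm_num
  · field_simp
  · field_simp
    ring
  · field_simp
    linear_combination (s^2) * h6
  · field_simp

end RootedGraph


open RootedGraph

/-- Concrete bounds: `λ₁(F₁, 1⁸) < -136/67`, `λ₁(F₂, 1⁷) < -178/87`,
`λ₁(F₃, 1⁴) < -λ'`, `λ₁(F₁, 0^∞) = -λ*`, `λ₁(F₂, 0^∞) ∈ (-136/67, -2)`, and
`λ₁(F₃, 0^∞) ∈ (-178/87, -2)`, where `λ' = √(2 + √5)`, `λ* = √ρ + 1/√ρ`, and `ρ` is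
the unique real root of `x³ = x + 1`. -/
theorem lam1_rowing_concrete_bounds (ρ : ℝ) (hρ : ρ ^ 3 = ρ + 1)
    (L1 L2 L3 : ℝ)
    (hL1 : Filter.Tendsto (fun n : ℕ => (F1.rowing (List.replicate n 0)).lam1)
      Filter.atTop (nhds L1))
    (hL2 : Filter.Tendsto (fun n : ℕ => (F2.rowing (List.replicate n 0)).lam1)
      Filter.atTop (nhds L2))
    (hL3 : Filter.Tendsto (fun n : ℕ => (F3.rowing (List.replicate n 0)).lam1)
      Filter.atTop (nhds L3)) :
    (F1.rowing (List.replicate 8 1)).lam1 < -(136 / 67 : ℝ) ∧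
    (F2.rowing (List.replicate 7 1)).lam1 < -(178 / 87 : ℝ) ∧
    (F3.rowing (List.replicate 4 1)).lam1 < -Real.sqrt (2 + Real.sqrt 5) ∧
    L1 = -(Real.sqrt ρ + (Real.sqrt ρ)⁻¹) ∧
    L2 ∈ Set.Ioo (-(136 / 67 : ℝ)) (-2 : ℝ) ∧
    L3 ∈ Set.Ioo (-(178 / 87 : ℝ)) (-2 : ℝ) := by
  haveI hne1 : Nonempty F1.V := ⟨F1.root⟩
  haveI hne2 : Nonempty F2.V := ⟨F2.root⟩
  haveI hne3 : Nonempty F3.V := ⟨F3.root⟩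
  -- facts about ρ and s = √ρ
  have hρ1 : 1 < ρ := by nlinarith [hρ, sq_nonneg ρ, sq_nonneg (ρ - 1), sq_nonneg (ρ + 1)]
  set s : ℝ := Real.sqrt ρ with hsdef
  have hρ0 : (0:ℝ) ≤ ρ := by linarith
  have hs2 : s ^ 2 = ρ := Real.sq_sqrt hρ0
  have hs1 : 1 < s := by
    rw [hsdef, show (1:ℝ) = Real.sqrt 1 by rw [Real.sqrt_one]]
    exact Real.sqrt_lt_sqrt (by norm_num) hρ1
  have hs0 : (0:ℝ) < s := lt_trans one_pos hs1
  have h6 : s ^ 6 = s ^ 2 + 1 := by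
    have : (s ^ 2) ^ 3 = s ^ 2 + 1 := by rw [hs2]; rw [hρ, ← hs2]
    nlinarith [this]
  -- Part 4 : L1 = -(√ρ + (√ρ)⁻¹)
  have hgam1 : (1:ℝ)/s ^ 2 - ((s^2+1)/s) * (1/s) + 1 ≤ 0 := by
    have h : (1:ℝ)/s^2 - ((s^2+1)/s) * (1/s) + 1 = 0 := by field_simp; ring
    linarith
  have hL1ge : -((s^2+1)/s) ≤ L1 := by
    refine L_ge_of_inv F1 (by positivity) ?_ (inv_F1 s hs1 h6) hL1
    rw [show ((1:ℝ)/s)^2 = 1/s^2 by ring]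
    exact hgam1
  have hL1le : L1 ≤ -((s^2+1)/s) := by
    refine L_le_of_heig F1 hs1 (by field_simp)
      ![s^2*(s^2+1), -(s*(s^2+1)^2), (s^4+s^2+1)*(s^2+1), -(s*(s^4+s^2+1))]
      (heig_F1 s hs1 h6) ?_ ?_ hL1
    · rw [ss_F1]
      have : (0:ℝ) < ((s^4+s^2+1)*(s^2+1))^2 := by positivity
      simp only [Matrix.cons_val_zero, Matrix.cons_val_one, Matrix.head_cons,
        Matrix.cons_val_two, Matrix.tail_cons, Matrix.cons_val_three]
      nlinarith [sq_nonneg (s^2*(s^2+1)), sq_nonneg (s*(s^2+1)^2), sq_nonneg (s*(s^4+s^2+1))]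
    · rw [ss_F1]
      rw [show (![s^2*(s^2+1), -(s*(s^2+1)^2), (s^4+s^2+1)*(s^2+1), -(s*(s^4+s^2+1))] :
        Fin 4 → ℝ) F1.root = (s^4+s^2+1)*(s^2+1) from rfl]
      simp only [Matrix.cons_val_zero, Matrix.cons_val_one, Matrix.head_cons,
        Matrix.cons_val_two, Matrix.tail_cons, Matrix.cons_val_three]
      nlinarith [sq_nonneg (s^2*(s^2+1)), sq_nonneg (s*(s^2+1)^2), sq_nonneg (s*(s^4+s^2+1))]
  have hL1eq : L1 = -(s + s⁻¹) := by
    have h1 : -((s^2+1)/s) = -(s + s⁻¹) := by field_simp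
    rw [← h1]
    exact le_antisymm hL1le hL1ge
  -- Part 5 : L2 bounds
  have hL2ge : -(885/436 : ℝ) ≤ L2 :=
    L_ge_of_inv F2 (by norm_num) gam_lam_F2 inv_F2 hL2
  have hL2le : L2 ≤ -(201/100 : ℝ) := by
    refine L_le_of_vec F2 8 hL2 (fun v => ((xvL2up v : ℤ) : ℝ)) _ ?_ ?_
    · rw [ss_intCast, qsL2up.2]; norm_num
    · rw [qf_intCast, ss_intCast, qsL2up.1, qsL2up.2]; norm_num
  -- Part 6 : L3 bounds
  have hL3ge : -(2537/1240 : ℝ) ≤ L3 :=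
    L_ge_of_inv F3 (by norm_num) gam_lam_F3 inv_F3 hL3
  have hL3le : L3 ≤ -(201/100 : ℝ) := by
    refine L_le_of_vec F3 10 hL3 (fun v => ((xvL3up v : ℤ) : ℝ)) _ ?_ ?_
    · rw [ss_intCast, qsL3up.2]; norm_num
    · rw [qf_intCast, ss_intCast, qsL3up.1, qsL3up.2]; norm_num
  refine ⟨p1bound, p2bound, p3bound, hL1eq, ⟨?_, ?_⟩, ⟨?_, ?_⟩⟩
  · linarith [hL2ge, show -(136/67 : ℝ) < -(885/436) by norm_num]
  · linarith [hL2le]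
  · linarith [hL3ge, show -(178/87 : ℝ) < -(2537/1240) by norm_num]
  · linarith [hL3le]
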